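/- Let (𝒳,μ) be a probability space, Γ a closed linear subspace of L²(μ) containing the constant functions, and consider the product space (𝒳×𝒳, μ⊗μ) with coordinate projections (X_i,X_j) (so X_i and X_j are independent with law μ). Let S = {(x_i,x_j) ↦ ν(x_i) + w(x_j) : ν, w ∈ Γ} ⊆ L²(μ⊗μ), assumed to be a closed subspace. Then for every δ ∈ L²(μ⊗μ), the orthogonal projection of δ onto S equals (Π_Γ δ₁)(X_i) + (Π_Γ δ₂)(X_j) − E[δ(X_i,X_j)], where δ₁(X_i) = E[δ(X_i,X_j) | X_i], δ₂(X_j) = E[δ(X_i,X_j) | X_j], and Π_Γ denotes orthogonal projection in L²(μ) onto Γ. -/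

import Mathlib

open MeasureTheory
open scoped ENNReal

lemma l2_mul_integrable {α : Type*} [MeasurableSpace α] {μ : Measure α} {f g : α → ℝ}
    (hf : MemLp f 2 μ) (hg : MemLp g 2 μ) :
    Integrable (fun x => f x * g x) μ := by
  have h : MemLp (f • g) 1 μ := hg.smul hf
  exact memLp_one_iff_integrable.mp h

open MeasureTheory
open scoped ENNReal

theorem proj_onto_sum_subspace_eq_sum_of_marginal_projections
    {𝒳 : Type*} [MeasurableSpace 𝒳]
    (μ : Measure 𝒳) [IsProbabilityMeasure μ]
    (Γ : Set (𝒳 → ℝ))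
    (hΓ_const : ∀ c : ℝ, (fun _ => c) ∈ Γ)
    (hΓ_add : ∀ f ∈ Γ, ∀ g ∈ Γ, (fun x => f x + g x) ∈ Γ)
    (hΓ_smul : ∀ (c : ℝ), ∀ f ∈ Γ, (fun x => c * f x) ∈ Γ)
    (hΓ_L2 : ∀ f ∈ Γ, MemLp f 2 μ)
    (δ : 𝒳 × 𝒳 → ℝ)
    (hδ_L2 : MemLp δ 2 (μ.prod μ))
    -- pδ₁ = Π_Γ δ₁ where δ₁(x) = E[δ(X_i,X_j) | X_i = x] = ∫ δ(x,y) μ(dy)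
    (pδ₁ : 𝒳 → ℝ) (hpδ₁_mem : pδ₁ ∈ Γ)
    (hpδ₁_proj : ∀ g ∈ Γ,
      (∫ x, ((∫ y, δ (x, y) ∂μ) - pδ₁ x) * g x ∂μ) = 0)
    -- pδ₂ = Π_Γ δ₂ where δ₂(y) = E[δ(X_i,X_j) | X_j = y] = ∫ δ(x,y) μ(dx)
    (pδ₂ : 𝒳 → ℝ) (hpδ₂_mem : pδ₂ ∈ Γ)
    (hpδ₂_proj : ∀ g ∈ Γ,
      (∫ y, ((∫ x, δ (x, y) ∂μ) - pδ₂ y) * g y ∂μ) = 0) :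
    -- A = pδ₁(X_i) + pδ₂(X_j) − E[δ] is the orthogonal projection of δ onto S
    (∃ ν ∈ Γ, ∃ w ∈ Γ, (fun p : 𝒳 × 𝒳 =>
        pδ₁ p.1 + pδ₂ p.2 - ∫ q, δ q ∂(μ.prod μ)) = fun p : 𝒳 × 𝒳 => ν p.1 + w p.2)
    ∧ (∀ ν ∈ Γ, ∀ w ∈ Γ,
        (∫ p : 𝒳 × 𝒳,
          (δ p - (pδ₁ p.1 + pδ₂ p.2 - ∫ q, δ q ∂(μ.prod μ))) * (ν p.1 + w p.2)
          ∂(μ.prod μ)) = 0) := by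
  classical
  have h21 : (1:ℝ≥0∞) ≤ 2 := by norm_num
  set C : ℝ := ∫ q, δ q ∂(μ.prod μ) with hC
  have hδ_int : Integrable δ (μ.prod μ) := hδ_L2.integrable h21
  have hΓ_int : ∀ f ∈ Γ, Integrable f μ := fun f hf => (hΓ_L2 f hf).integrable h21
  -- L² of composites with coordinates
  have mpf : MeasurePreserving (Prod.fst : 𝒳 × 𝒳 → 𝒳) (μ.prod μ) μ :=
    ⟨measurable_fst, by simp [Measure.map_fst_prod, measure_univ, one_smul]⟩
  have mps : MeasurePreserving (Prod.snd : 𝒳 × 𝒳 → 𝒳) (μ.prod μ) μ :=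
    ⟨measurable_snd, by simp [Measure.map_snd_prod, measure_univ, one_smul]⟩
  have hfstL2 : ∀ f ∈ Γ, MemLp (fun p : 𝒳 × 𝒳 => f p.1) 2 (μ.prod μ) := fun f hf =>
    (hΓ_L2 f hf).comp_measurePreserving mpf
  have hsndL2 : ∀ f ∈ Γ, MemLp (fun p : 𝒳 × 𝒳 => f p.2) 2 (μ.prod μ) := fun f hf =>
    (hΓ_L2 f hf).comp_measurePreserving mps
  have hhL2 : MemLp (fun p : 𝒳 × 𝒳 => δ p - pδ₁ p.1 - pδ₂ p.2 + C) 2 (μ.prod μ) :=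
    ((hδ_L2.sub (hfstL2 _ hpδ₁_mem)).sub (hsndL2 _ hpδ₂_mem)).add (memLp_const C)
  have hp1i : Integrable pδ₁ μ := hΓ_int _ hpδ₁_mem
  have hp2i : Integrable pδ₂ μ := hΓ_int _ hpδ₂_mem
  set Ip₁ : ℝ := ∫ x, pδ₁ x ∂μ with hIp₁
  set Ip₂ : ℝ := ∫ y, pδ₂ y ∂μ with hIp₂
  -- Fubini identities
  have hCxy : (∫ x, ∫ y, δ (x, y) ∂μ ∂μ) = C := (integral_prod δ hδ_int).symm
  have hswap : (∫ x, ∫ y, δ (x, y) ∂μ ∂μ) = ∫ y, ∫ x, δ (x, y) ∂μ ∂μ :=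
    integral_integral_swap (f := fun x y => δ (x, y)) hδ_int
  have hδ₁_int : Integrable (fun x => ∫ y, δ (x, y) ∂μ) μ := hδ_int.integral_prod_left
  have hδ₂_int : Integrable (fun y => ∫ x, δ (x, y) ∂μ) μ := hδ_int.integral_prod_right
  -- C = ∫ pδ₁ and C = ∫ pδ₂
  have hCIp₁ : C = Ip₁ := by
    have h1 := hpδ₁_proj (fun _ => 1) (hΓ_const 1)
    simp only [mul_one] at h1
    rw [integral_sub hδ₁_int hp1i, sub_eq_zero] at h1
    rw [← hCxy, h1]
  have hCIp₂ : C = Ip₂ := by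
    have h1 := hpδ₂_proj (fun _ => 1) (hΓ_const 1)
    simp only [mul_one] at h1
    rw [integral_sub hδ₂_int hp2i, sub_eq_zero] at h1
    rw [← hCxy, hswap, h1]
  constructor
  · refine ⟨fun x => pδ₁ x + (fun _ : 𝒳 => -C) x,
      hΓ_add _ hpδ₁_mem _ (hΓ_const (-C)), pδ₂, hpδ₂_mem, ?_⟩
    funext p
    simp only
    ring
  · intro ν hν w hw
    have hνL2 := hfstL2 ν hν
    have hwL2 := hsndL2 w hw
    have hint1 : Integrable (fun p : 𝒳 × 𝒳 =>
        (δ p - pδ₁ p.1 - pδ₂ p.2 + C) * ν p.1) (μ.prod μ) := l2_mul_integrable hhL2 hνL2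
    have hint2 : Integrable (fun p : 𝒳 × 𝒳 =>
        (δ p - pδ₁ p.1 - pδ₂ p.2 + C) * w p.2) (μ.prod μ) := l2_mul_integrable hhL2 hwL2
    have key1 : (∫ p, (δ p - pδ₁ p.1 - pδ₂ p.2 + C) * ν p.1 ∂(μ.prod μ)) = 0 := by
      rw [integral_prod _ hint1]
      have hcongr : (∫ x, ∫ y, (δ (x, y) - pδ₁ x - pδ₂ y + C) * ν x ∂μ ∂μ)
          = ∫ x, ((∫ y, δ (x, y) ∂μ) - pδ₁ x) * ν x ∂μ := by
        refine integral_congr_ae ?_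
        filter_upwards [hδ_int.prod_right_ae] with x hx
        rw [integral_mul_const]
        have i1 : Integrable (fun y => δ (x, y) - pδ₁ x) μ := hx.sub (integrable_const _)
        have i2 : Integrable (fun y => δ (x, y) - pδ₁ x - pδ₂ y) μ := i1.sub hp2i
        have : (∫ y, (δ (x, y) - pδ₁ x - pδ₂ y + C) ∂μ)
            = (∫ y, δ (x, y) ∂μ) - pδ₁ x - Ip₂ + C := by
          rw [integral_add i2 (integrable_const C), integral_sub i1 hp2i,
            integral_sub hx (integrable_const _), integral_const, integral_const]
          simp [measure_univ, hIp₂]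
        rw [this, hCIp₂]
        ring
      rw [hcongr]
      exact hpδ₁_proj ν hν
    have key2 : (∫ p, (δ p - pδ₁ p.1 - pδ₂ p.2 + C) * w p.2 ∂(μ.prod μ)) = 0 := by
      rw [integral_prod _ hint2,
        integral_integral_swap (f := fun x y => (δ (x, y) - pδ₁ x - pδ₂ y + C) * w y) hint2]
      have hcongr : (∫ y, ∫ x, (δ (x, y) - pδ₁ x - pδ₂ y + C) * w y ∂μ ∂μ)
          = ∫ y, ((∫ x, δ (x, y) ∂μ) - pδ₂ y) * w y ∂μ := by
        refine integral_congr_ae ?_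
        filter_upwards [hδ_int.prod_left_ae] with y hy
        rw [integral_mul_const]
        have i1 : Integrable (fun x => δ (x, y) - pδ₁ x) μ := hy.sub hp1i
        have i2 : Integrable (fun x => δ (x, y) - pδ₁ x - pδ₂ y) μ := i1.sub (integrable_const _)
        have : (∫ x, (δ (x, y) - pδ₁ x - pδ₂ y + C) ∂μ)
            = (∫ x, δ (x, y) ∂μ) - Ip₁ - pδ₂ y + C := by
          rw [integral_add i2 (integrable_const C), integral_sub i1 (integrable_const _),
            integral_sub hy hp1i, integral_const, integral_const]
          simp [measure_univ, hIp₁]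
        rw [this, hCIp₁]
        ring
      rw [hcongr]
      exact hpδ₂_proj w hw
    have hrw : (fun p : 𝒳 × 𝒳 => (δ p - (pδ₁ p.1 + pδ₂ p.2 - C)) * (ν p.1 + w p.2))
        = fun p : 𝒳 × 𝒳 => (δ p - pδ₁ p.1 - pδ₂ p.2 + C) * ν p.1
            + (δ p - pδ₁ p.1 - pδ₂ p.2 + C) * w p.2 := by
      funext p; ring
    rw [hrw, integral_add hint1 hint2, key1, key2, add_zero]
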